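/- Let n = 4k with k ≥ 1 and let σ be a generalized vector cross product on ℝⁿ. Then for every nonzero vector X ∈ ℝⁿ and every nonzero vector U ∈ ker(σ_X), one has ker(σ_U) = ker(σ_X). -/

import Mathlib

open scoped RealInnerProductSpace

noncomputable section

/-- Euclidean space `ℝⁿ`. -/
abbrev Euc (n : ℕ) : Type := EuclideanSpace ℝ (Fin n)

/-- The skew-symmetric endomorphism `τ_X` of `ℝⁿ` associated to a 3-form `τ` and a vector `X`,
characterized by `⟪τ_X Y, Z⟫ = τ (X, Y, Z)`. -/
noncomputable def contr3 {n : ℕ} (τ : AlternatingMap ℝ (Euc n) ℝ (Fin 3)) (X : Euc n) :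
    Euc n →ₗ[ℝ] Euc n where
  toFun Y := ∑ i : Fin n,
    ((τ.curryLeft X).curryLeft Y ![EuclideanSpace.single i 1]) • EuclideanSpace.single i (1 : ℝ)
  map_add' Y₁ Y₂ := by
    simp [map_add, add_smul, Finset.sum_add_distrib]
  map_smul' c Y := by
    simp [map_smul, smul_smul, Finset.smul_sum]

/-- `τ` is a vector cross product: `‖τ_X Y‖² = ‖X‖²‖Y‖² − ⟪X,Y⟫²`. -/
def IsVCP {n : ℕ} (τ : AlternatingMap ℝ (Euc n) ℝ (Fin 3)) : Prop :=
  ∀ X Y : Euc n, ‖contr3 τ X Y‖ ^ 2 = ‖X‖ ^ 2 * ‖Y‖ ^ 2 - ⟪X, Y⟫ ^ 2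

/-- `σ` is a generalized vector cross product: there is a nonzero skew-symmetric endomorphism `A`
such that for every unit vector `X`, `σ_X` is orthogonally conjugate to `A`. -/
def IsGVCP {n : ℕ} (σ : AlternatingMap ℝ (Euc n) ℝ (Fin 3)) : Prop :=
  ∃ A : Euc n →ₗ[ℝ] Euc n, A ≠ 0 ∧ (∀ X Y : Euc n, ⟪A X, Y⟫ = -⟪X, A Y⟫) ∧
    ∀ X : Euc n, ‖X‖ = 1 → ∃ u : Euc n ≃ₗᵢ[ℝ] Euc n,
      ∀ Y : Euc n, contr3 σ X Y = u (A (u.symm Y))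

/-- The endomorphism `U ⊗ V : X ↦ ⟪X, V⟫ U`. -/
noncomputable def tens {n : ℕ} (U V : Euc n) : Euc n →ₗ[ℝ] Euc n where
  toFun X := ⟪X, V⟫ • U
  map_add' X₁ X₂ := by (try dsimp only); rw [inner_add_left, add_smul]
  map_smul' c X := by simp only [RingHom.id_apply]; rw [real_inner_smul_left, mul_smul]

/-- The `i`-th coordinate, as a linear functional on `ℝⁿ`. -/
noncomputable def coordL {n : ℕ} (i : Fin n) : Euc n →ₗ[ℝ] ℝ where
  toFun x := x i
  map_add' _ _ := rfl
  map_smul' _ _ := rfl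

/-- The elementary 3-form `eᵢ ∧ eⱼ ∧ e_k` on `ℝⁿ`. -/
noncomputable def elem3 {n : ℕ} (i j k : Fin n) : AlternatingMap ℝ (Euc n) ℝ (Fin 3) :=
  (Matrix.detRowAlternating : AlternatingMap ℝ (Fin 3 → ℝ) ℝ (Fin 3)).compLinearMap
    (LinearMap.pi (fun s : Fin 3 => coordL (![i, j, k] s)))

/-- The action of an orthogonal transformation `α` on 3-forms:
`(α · τ)(X,Y,Z) = τ(α⁻¹X, α⁻¹Y, α⁻¹Z)`. -/
noncomputable def oAct {n : ℕ} (α : Euc n ≃ₗᵢ[ℝ] Euc n)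
    (τ : AlternatingMap ℝ (Euc n) ℝ (Fin 3)) : AlternatingMap ℝ (Euc n) ℝ (Fin 3) :=
  τ.compLinearMap α.symm.toLinearEquiv.toLinearMap

/-- The volume form `e₁ ∧ e₂ ∧ e₃` (in any `ℝⁿ` with `n ≥ 3`). -/
noncomputable def vol3Gen {n : ℕ} (h : 3 ≤ n) : AlternatingMap ℝ (Euc n) ℝ (Fin 3) :=
  elem3 ⟨0, by omega⟩ ⟨1, by omega⟩ ⟨2, by omega⟩

/-- The fundamental `G₂` 3-form
`τ₀ = e₁∧e₂∧e₇ + e₃∧e₄∧e₇ + e₅∧e₆∧e₇ + e₁∧e₃∧e₅ − e₁∧e₄∧e₆ − e₂∧e₃∧e₆ − e₂∧e₄∧e₅`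
(with 1-indexed basis vectors, stated in any `ℝⁿ` with `n ≥ 7`). -/
noncomputable def tau0Gen {n : ℕ} (h : 7 ≤ n) : AlternatingMap ℝ (Euc n) ℝ (Fin 3) :=
  elem3 ⟨0, by omega⟩ ⟨1, by omega⟩ ⟨6, by omega⟩
  + elem3 ⟨2, by omega⟩ ⟨3, by omega⟩ ⟨6, by omega⟩
  + elem3 ⟨4, by omega⟩ ⟨5, by omega⟩ ⟨6, by omega⟩
  + elem3 ⟨0, by omega⟩ ⟨2, by omega⟩ ⟨4, by omega⟩
  - elem3 ⟨0, by omega⟩ ⟨3, by omega⟩ ⟨5, by omega⟩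
  - elem3 ⟨1, by omega⟩ ⟨2, by omega⟩ ⟨5, by omega⟩
  - elem3 ⟨1, by omega⟩ ⟨3, by omega⟩ ⟨4, by omega⟩

/-- The `SU(3)` 3-form `σ₀ = e₁∧e₃∧e₅ − e₁∧e₄∧e₆ − e₂∧e₃∧e₆ − e₂∧e₄∧e₅`
(with 1-indexed basis vectors, stated in any `ℝⁿ` with `n ≥ 6`). -/
noncomputable def sigma0Gen {n : ℕ} (h : 6 ≤ n) : AlternatingMap ℝ (Euc n) ℝ (Fin 3) :=
  elem3 ⟨0, by omega⟩ ⟨2, by omega⟩ ⟨4, by omega⟩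
  - elem3 ⟨0, by omega⟩ ⟨3, by omega⟩ ⟨5, by omega⟩
  - elem3 ⟨1, by omega⟩ ⟨2, by omega⟩ ⟨5, by omega⟩
  - elem3 ⟨1, by omega⟩ ⟨3, by omega⟩ ⟨4, by omega⟩

end

section Statement7Aux

variable {n : ℕ} (τ : AlternatingMap ℝ (Euc n) ℝ (Fin 3))

lemma contr3_coord (X Y : Euc n) (i : Fin n) :
    contr3 τ X Y i = τ ![X, Y, EuclideanSpace.single i 1] := by
  show (∑ j : Fin n, ((τ.curryLeft X).curryLeft Y ![EuclideanSpace.single j 1]) •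
      EuclideanSpace.single j (1 : ℝ)) i = _
  rw [WithLp.ofLp_sum, Finset.sum_apply i Finset.univ]
  simp [EuclideanSpace.single_apply, Finset.sum_ite_eq']

lemma euc_decomp (Z : Euc n) : ∑ i : Fin n, Z i • EuclideanSpace.single i (1 : ℝ) = Z := by
  ext j
  rw [WithLp.ofLp_sum, Finset.sum_apply j Finset.univ]
  simp [EuclideanSpace.single_apply, Finset.sum_ite_eq']

/-- Bridge: `⟪σ_X Y, Z⟫ = σ(X,Y,Z)`. -/
lemma inner_contr3 (X Y Z : Euc n) : ⟪contr3 τ X Y, Z⟫ = τ ![X, Y, Z] := by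
  have hL : ∀ W : Euc n, τ ![X, Y, W] = ((τ.curryLeft X).curryLeft Y) ![W] := by
    intro W; rfl
  have key : τ ![X, Y, Z] = ∑ i : Fin n, Z i * τ ![X, Y, EuclideanSpace.single i 1] := by
    let g := (τ.curryLeft X).curryLeft Y
    let L : Euc n →ₗ[ℝ] ℝ :=
      { toFun := fun w => g ![w]
        map_add' := fun a b => g.map_vecCons_add ![] a b
        map_smul' := fun c a => g.map_vecCons_smul ![] c a }
    have : τ ![X, Y, Z] = L Z := hL Z
    rw [this, ← euc_decomp Z, map_sum]
    simp only [map_smul, smul_eq_mul, euc_decomp]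
    refine Finset.sum_congr rfl fun i _ => ?_
    rw [hL (EuclideanSpace.single i 1)]
    rfl
  rw [key]
  rw [PiLp.inner_apply]
  refine Finset.sum_congr rfl fun i _ => ?_
  rw [contr3_coord]
  simp [mul_comm]

lemma vec_comp_swap01 (a b c : Euc n) :
    (![a, b, c] ∘ ⇑(Equiv.swap (0 : Fin 3) 1)) = ![b, a, c] := by
  funext i; fin_cases i <;> simp [Equiv.swap_apply_def] <;> rfl

lemma vec_comp_swap12 (a b c : Euc n) :
    (![a, b, c] ∘ ⇑(Equiv.swap (1 : Fin 3) 2)) = ![a, c, b] := by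
  funext i; fin_cases i <;> simp [Equiv.swap_apply_def] <;> rfl

lemma tau_swap01 (a b c : Euc n) : τ ![b, a, c] = -τ ![a, b, c] := by
  rw [← vec_comp_swap01]
  exact τ.map_swap _ (by decide)

lemma tau_swap12 (a b c : Euc n) : τ ![a, c, b] = -τ ![a, b, c] := by
  rw [← vec_comp_swap12]
  exact τ.map_swap _ (by decide)

/-- cyclic invariance -/
lemma tau_cyc (a b c : Euc n) : τ ![a, b, c] = τ ![b, c, a] := by
  rw [show τ ![b, c, a] = -τ ![b, a, c] from tau_swap12 τ b a c,
    tau_swap01 τ a b c, neg_neg]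

/-- skewness of `σ_X` -/
lemma contr3_skew (X v w : Euc n) : ⟪contr3 τ X v, w⟫ = -⟪v, contr3 τ X w⟫ := by
  rw [inner_contr3, real_inner_comm, inner_contr3, tau_swap12 τ X w v]

/-- linearity in the first slot -/
lemma contr3_add_smul (X Z : Euc n) (x : ℝ) :
    contr3 τ (X + x • Z) = contr3 τ X + x • contr3 τ Z := by
  refine LinearMap.ext fun Y => ?_
  ext i
  have h1 : contr3 τ (X + x • Z) Y i = τ ![X + x • Z, Y, EuclideanSpace.single i 1] :=
    contr3_coord _ _ _ _
  rw [h1]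
  simp only [LinearMap.add_apply, LinearMap.smul_apply, PiLp.add_apply, PiLp.smul_apply, smul_eq_mul]
  rw [contr3_coord, contr3_coord]
  have ha := τ.map_vecCons_add ![Y, EuclideanSpace.single i 1] X (x • Z)
  have hs := τ.map_vecCons_smul ![Y, EuclideanSpace.single i 1] x Z
  simp only [Matrix.vecCons] at ha hs ⊢
  rw [ha, hs]; simp [smul_eq_mul]

set_option maxHeartbeats 1000000 in
set_option synthInstance.maxHeartbeats 400000 in
/-- **Pencil lemma**: if `B` is skew-symmetric and the kernels of `B + x • C` have the same
dimension as the kernel of `B` for all small nonzero `x`, then the bilinear form of `C`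
vanishes on the kernel of `B`. -/
lemma pencil (B C : Euc n →ₗ[ℝ] Euc n)
    (hB : ∀ v w : Euc n, ⟪B v, w⟫ = -⟪v, B w⟫) {δ : ℝ} (hδ : 0 < δ)
    (hdim : ∀ x : ℝ, x ≠ 0 → |x| < δ →
      Module.finrank ℝ (LinearMap.ker (B + x • C)) = Module.finrank ℝ (LinearMap.ker B))
    {w w' : Euc n} (hw : w ∈ LinearMap.ker B) (hw' : w' ∈ LinearMap.ker B) :
    ⟪C w, w'⟫ = 0 := by
  classical
  set V := LinearMap.ker B with hV
  have hwB : B w = 0 := hw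
  have hw'B : B w' = 0 := hw'
  -- B maps everything into Vᗮ
  have hrange : ∀ v : Euc n, B v ∈ Vᗮ := by
    intro v
    rw [Submodule.mem_orthogonal]
    intro u hu
    have huB : B u = 0 := hu
    rw [real_inner_comm, hB, huB, inner_zero_right, neg_zero]
  -- restriction of B to Vᗮ
  set B' : Vᗮ →ₗ[ℝ] Vᗮ := B.restrict (fun x _ => hrange x) with hB'
  have hinj : Function.Injective B' := by
    rw [← LinearMap.ker_eq_bot, Submodule.eq_bot_iff]
    rintro ⟨v, hv⟩ hk
    have hv0 : B v = 0 := congrArg Subtype.val hk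
    have hvV : v ∈ V := hv0
    simp only [Submodule.mk_eq_zero]
    exact inner_self_eq_zero.mp ((Submodule.mem_orthogonal' _ _).mp hv v hvV)
  have hsurj : Function.Surjective B' := LinearMap.injective_iff_surjective.mp hinj
  set e : Vᗮ ≃ₗ[ℝ] Vᗮ := LinearEquiv.ofBijective B' ⟨hinj, hsurj⟩ with he
  set S := LinearMap.toContinuousLinearMap (e.symm : Vᗮ →ₗ[ℝ] Vᗮ) with hS
  set c : ℝ := ‖S‖ with hc
  have hc0 : 0 ≤ c := hc ▸ norm_nonneg S
  have hlow : ∀ v : Vᗮ, ‖(v : Euc n)‖ ≤ c * ‖B (v : Euc n)‖ := by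
    intro v
    have h1 : v = e.symm (e v) := (e.symm_apply_apply v).symm
    have h2 : e.symm (e v) = S (e v) := by simp [hS]
    calc ‖(v : Euc n)‖ = ‖v‖ := rfl
      _ = ‖S (e v)‖ := by rw [← h2, ← h1]
      _ ≤ ‖S‖ * ‖e v‖ := S.le_opNorm _
      _ = c * ‖B (v : Euc n)‖ := by
          congr 1
  set Cc := LinearMap.toContinuousLinearMap C with hCc
  set K : ℝ := ‖Cc‖ with hKdef
  have hK0 : 0 ≤ K := hKdef ▸ norm_nonneg Cc
  have hK : ∀ v : Euc n, ‖C v‖ ≤ K * ‖v‖ := by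
    intro v
    have := Cc.le_opNorm v
    simpa [hCc] using this
  clear_value S Cc c K
  clear hS hCc hc hKdef he hB'
  set P := Submodule.orthogonalProjectionOnto V with hP
  set q := ⟪C w, w'⟫ with hq
  have key : ∀ ε : ℝ, 0 < ε → |q| ≤ ε := by
    intro ε hε
    set M : ℝ := c * K * K * ‖w‖ * ‖w'‖ with hM
    have hM0 : 0 ≤ M := by positivity
    set x : ℝ := min (δ/2) (min (1/(2*(c*K+1))) (ε/(2*M+1))) with hxdef
    have hx0 : 0 < x := by
      apply lt_min (by linarith)
      apply lt_min
      · positivity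
      · positivity
    have hxδ : x < δ := lt_of_le_of_lt (min_le_left _ _) (by linarith)
    have hxcK : x * (c * K) ≤ 1/2 := by
      have h1 : x ≤ 1/(2*(c*K+1)) := le_trans (min_le_right _ _) (min_le_left _ _)
      have h2 : 0 < 2*(c*K+1) := by positivity
      have h3 : 0 ≤ c * K := by positivity
      rw [le_div_iff₀ h2] at h1
      nlinarith
    have hxM : 2 * M * x ≤ ε := by
      have h1 : x ≤ ε/(2*M+1) := le_trans (min_le_right _ _) (min_le_right _ _)
      have h2 : 0 < 2*M+1 := by linarith
      rw [le_div_iff₀ h2] at h1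
      nlinarith
    have hfr := hdim x (ne_of_gt hx0) (by rwa [abs_of_pos hx0])
    clear_value x
    clear hxdef
    set Bx := B + x • C with hBx
    have hBxapp : ∀ v : Euc n, Bx v = B v + x • C v := by
      intro v; rw [hBx]; rfl
    have hsolve : ∀ v : Euc n, v ∈ LinearMap.ker Bx → B v = -(x • C v) := by
      intro v hv
      have h0 : Bx v = 0 := hv
      rw [hBxapp] at h0
      exact eq_neg_of_add_eq_zero_left h0
    -- the projection from ker Bx to V is injective, hence surjective
    set φ : LinearMap.ker Bx →ₗ[ℝ] V :=
      ((P : Euc n →ₗ[ℝ] V).comp (LinearMap.ker Bx).subtype) with hφ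
    have hφapp : ∀ v : LinearMap.ker Bx, φ v = P (v : Euc n) := fun v => rfl
    have hφinj : Function.Injective φ := by
      rw [← LinearMap.ker_eq_bot, Submodule.eq_bot_iff]
      rintro ⟨v, hv⟩ hk
      have hPv : P v = 0 := by
        have := hφapp ⟨v, hv⟩
        rw [hk] at this
        exact this.symm
      have hvperp : v ∈ Vᗮ := Submodule.orthogonalProjectionOnto_eq_zero_iff.mp hPv
      have hest : ‖v‖ ≤ c * (x * (K * ‖v‖)) := by
        calc ‖v‖ ≤ c * ‖B v‖ := hlow ⟨v, hvperp⟩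
          _ = c * ‖x • C v‖ := by rw [hsolve v hv, norm_neg]
          _ = c * (|x| * ‖C v‖) := by rw [norm_smul]; rfl
          _ = c * (x * ‖C v‖) := by rw [abs_of_pos hx0]
          _ ≤ c * (x * (K * ‖v‖)) :=
              mul_le_mul_of_nonneg_left (mul_le_mul_of_nonneg_left (hK v) hx0.le) hc0
      have hest2 : ‖v‖ ≤ (x * (c * K)) * ‖v‖ := by
        calc ‖v‖ ≤ c * (x * (K * ‖v‖)) := hest
          _ = (x * (c * K)) * ‖v‖ := by ring
      have h3 : (0:ℝ) ≤ ‖v‖ := norm_nonneg v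
      have h4 : (x * (c * K)) * ‖v‖ ≤ (1/2) * ‖v‖ := mul_le_mul_of_nonneg_right hxcK h3
      have hnv : ‖v‖ = 0 := by linarith
      exact Subtype.ext (norm_eq_zero.mp hnv)
    have hφsurj : Function.Surjective φ :=
      (LinearMap.injective_iff_surjective_of_finrank_eq_finrank hfr).mp hφinj
    obtain ⟨v, hv⟩ := hφsurj ⟨w, hw⟩
    have hvker : B (v : Euc n) = -(x • C (v : Euc n)) := hsolve _ v.2
    have hPv : P (v : Euc n) = ⟨w, hw⟩ := by rw [← hφapp]; exact hv
    set y : Euc n := (v : Euc n) - w with hy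
    have hyperp : y ∈ Vᗮ := by
      apply Submodule.orthogonalProjectionOnto_eq_zero_iff.mp
      have : P y = P (v : Euc n) - P w := map_sub P _ _
      rw [this, hPv, Submodule.orthogonalProjectionOnto_mem_subspace_eq_self ⟨w, hw⟩, sub_self]
    have hBy : B y = -(x • C (v : Euc n)) := by
      rw [hy, map_sub, hwB, sub_zero, hvker]
    have hyest : ‖y‖ ≤ 2 * (x * (c * K)) * ‖w‖ := by
      have h1 : ‖y‖ ≤ c * (x * (K * ‖(v : Euc n)‖)) := by
        calc ‖y‖ ≤ c * ‖B y‖ := hlow ⟨y, hyperp⟩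
          _ = c * (|x| * ‖C (v : Euc n)‖) := by rw [hBy, norm_neg, norm_smul]; rfl
          _ = c * (x * ‖C (v : Euc n)‖) := by rw [abs_of_pos hx0]
          _ ≤ c * (x * (K * ‖(v : Euc n)‖)) :=
              mul_le_mul_of_nonneg_left (mul_le_mul_of_nonneg_left (hK _) hx0.le) hc0
      have h2 : ‖(v : Euc n)‖ ≤ ‖w‖ + ‖y‖ := by
        have hvwy : (v : Euc n) = w + y := by rw [hy]; abel
        rw [hvwy]; exact norm_add_le _ _
      have h3 : c * (x * (K * ‖(v : Euc n)‖)) = (x * (c*K)) * ‖(v : Euc n)‖ := by ring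
      have h4 : (x * (c*K)) * ‖(v : Euc n)‖ ≤ (x * (c*K)) * (‖w‖ + ‖y‖) :=
        mul_le_mul_of_nonneg_left h2 (by positivity)
      have h5 : (x * (c*K)) * ‖y‖ ≤ (1/2) * ‖y‖ :=
        mul_le_mul_of_nonneg_right hxcK (norm_nonneg y)
      have h6 : (x * (c*K)) * (‖w‖ + ‖y‖) = (x*(c*K))*‖w‖ + (x*(c*K))*‖y‖ := by ring
      linarith [h1, h4, h5]
    have hqv : ⟪C (v : Euc n), w'⟫ = 0 := by
      have h1 : x * ⟪C (v : Euc n), w'⟫ = ⟪x • C (v : Euc n), w'⟫ :=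
        (real_inner_smul_left _ _ _).symm
      have h2 : (x • C (v : Euc n)) = -(B (v : Euc n)) := by rw [hvker, neg_neg]
      rw [h2, inner_neg_left, hB, neg_neg, hw'B, inner_zero_right] at h1
      exact (mul_eq_zero.mp h1).resolve_left (ne_of_gt hx0)
    have hqy : q = -⟪C y, w'⟫ := by
      have hcv : C (v : Euc n) = C w + C y := by
        have hvwy : (v : Euc n) = w + y := by rw [hy]; abel
        rw [hvwy, map_add]
      have := hqv
      rw [hcv, inner_add_left] at this
      rw [hq]
      linarith
    rw [hqy, abs_neg]
    calc |⟪C y, w'⟫| ≤ ‖C y‖ * ‖w'‖ := abs_real_inner_le_norm _ _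
      _ ≤ (K * ‖y‖) * ‖w'‖ := mul_le_mul_of_nonneg_right (hK y) (norm_nonneg w')
      _ ≤ (K * (2 * (x * (c * K)) * ‖w‖)) * ‖w'‖ :=
          mul_le_mul_of_nonneg_right (mul_le_mul_of_nonneg_left hyest hK0) (norm_nonneg w')
      _ = 2 * M * x := by rw [hM]; ring
      _ ≤ ε := hxM
  have : |q| ≤ 0 := le_of_forall_pos_le_add (by intro ε hε; simpa using key ε hε)
  exact abs_nonpos_iff.mp this

lemma contr3_zero : contr3 τ (0 : Euc n) = 0 := by
  refine LinearMap.ext fun Y => ?_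
  ext i
  rw [contr3_coord]
  have h0 : (![(0 : Euc n), Y, EuclideanSpace.single i 1]) 0 = 0 := rfl
  rw [τ.map_coord_zero 0 h0]
  rfl

lemma contr3_smul (Z : Euc n) (x : ℝ) : contr3 τ (x • Z) = x • contr3 τ Z := by
  have h := contr3_add_smul τ 0 Z x
  rw [zero_add, contr3_zero] at h
  rw [h, zero_add]

lemma finrank_ker_contr3 (A : Euc n →ₗ[ℝ] Euc n)
    (hconj : ∀ X : Euc n, ‖X‖ = 1 → ∃ u : Euc n ≃ₗᵢ[ℝ] Euc n,
      ∀ Y : Euc n, contr3 τ X Y = u (A (u.symm Y)))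
    (Y : Euc n) (hY : Y ≠ 0) :
    Module.finrank ℝ (LinearMap.ker (contr3 τ Y)) = Module.finrank ℝ (LinearMap.ker A) := by
  have hnY : ‖Y‖ ≠ 0 := norm_ne_zero_iff.mpr hY
  set Yn : Euc n := ‖Y‖⁻¹ • Y with hYn
  have hYn1 : ‖Yn‖ = 1 := by
    rw [hYn, norm_smul, norm_inv, norm_norm, inv_mul_cancel₀ hnY]
  obtain ⟨u, hu⟩ := hconj Yn hYn1
  have hker1 : LinearMap.ker (contr3 τ Y) = LinearMap.ker (contr3 τ Yn) := by
    have hYeq : Y = ‖Y‖ • Yn := by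
      rw [hYn, smul_smul, mul_inv_cancel₀ hnY, one_smul]
    rw [show contr3 τ Y = ‖Y‖ • contr3 τ Yn by rw [← contr3_smul, ← hYeq]]
    exact LinearMap.ker_smul _ _ hnY
  have hker2 : LinearMap.ker (contr3 τ Yn) = (LinearMap.ker A).map (u : Euc n →ₗ[ℝ] Euc n) := by
    ext v
    simp only [LinearMap.mem_ker, Submodule.mem_map]
    constructor
    · intro hv
      rw [hu v] at hv
      refine ⟨u.symm v, ?_, by simp⟩
      have : u (A (u.symm v)) = 0 := hv
      have h2 := congrArg u.symm this
      simpa using h2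
    · rintro ⟨z, hz, rfl⟩
      rw [hu]
      simp [hz]
  rw [hker1, hker2]
  exact LinearEquiv.finrank_map_eq u.toLinearEquiv (LinearMap.ker A)

end Statement7Aux

/-- Let `n = 4k` with `k ≥ 1` and let `σ` be a generalized vector cross product
on `ℝⁿ`. Then for every nonzero vector `X ∈ ℝⁿ` and every nonzero vector `U ∈ ker(σ_X)`, one has
`ker(σ_U) = ker(σ_X)`. -/
theorem statement7 {k : ℕ} (hk : 1 ≤ k) (σ : AlternatingMap ℝ (Euc (4 * k)) ℝ (Fin 3))
    (hσ : IsGVCP σ) (X : Euc (4 * k)) (hX : X ≠ 0) (U : Euc (4 * k)) (hU : U ≠ 0)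
    (hUker : U ∈ LinearMap.ker (contr3 σ X)) :
    LinearMap.ker (contr3 σ U) = LinearMap.ker (contr3 σ X) := by
  obtain ⟨A, hA0, hAskew, hconj⟩ := hσ
  have hm := finrank_ker_contr3 σ A hconj
  -- key vanishing statement: any `σ_Z` pairs two kernel elements of `σ_X` to zero
  have key : ∀ Z w w' : Euc (4*k), w ∈ LinearMap.ker (contr3 σ X) →
      w' ∈ LinearMap.ker (contr3 σ X) → ⟪contr3 σ Z w, w'⟫ = 0 := by
    intro Z w w' hwk hw'k
    have hδpos : 0 < ‖X‖ / (‖Z‖ + 1) :=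
      div_pos (norm_pos_iff.mpr hX) (by positivity)
    refine pencil (contr3 σ X) (contr3 σ Z) (contr3_skew σ X) hδpos ?_ hwk hw'k
    intro x hx hxδ
    have hne : X + x • Z ≠ 0 := by
      intro hcontra
      have h1 : X = -(x • Z) := eq_neg_of_add_eq_zero_left hcontra
      have h2 : ‖X‖ = |x| * ‖Z‖ := by rw [h1, norm_neg, norm_smul]; rfl
      rw [lt_div_iff₀ (by positivity : (0:ℝ) < ‖Z‖ + 1)] at hxδ
      nlinarith [abs_nonneg x, norm_nonneg Z]
    rw [← contr3_add_smul, hm _ hne, hm _ hX]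
  have hsub : LinearMap.ker (contr3 σ X) ≤ LinearMap.ker (contr3 σ U) := by
    intro w hwk
    rw [LinearMap.mem_ker]
    have hco : ∀ i, contr3 σ U w i = 0 := by
      intro i
      rw [contr3_coord]
      have h1 : σ ![U, w, EuclideanSpace.single i 1]
          = σ ![EuclideanSpace.single i 1, U, w] := by
        rw [tau_cyc σ U w (EuclideanSpace.single i 1),
          tau_cyc σ w (EuclideanSpace.single i 1) U]
      rw [h1, ← inner_contr3]
      exact key _ _ _ hUker hwk
    ext i
    rw [hco i]
    rfl
  exact (Submodule.eq_of_le_of_finrank_eq hsub (by rw [hm U hU, hm X hX])).symm
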